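/- For every positive integer t there exists k such that the graph G_k (full subdivision of K_k) has no book embedding in t−1 pages. -/

import Mathlib

/-- Vertices of the full subdivision of `K_k`: singleton and doubleton subsets of `Fin k`. -/
def GVert (k : ℕ) : Type := {s : Finset (Fin k) // s.card = 1 ∨ s.card = 2}

/-- The full subdivision `G_k` of the complete graph `K_k`: vertices are the singleton and
doubleton subsets of `Fin k`, with an edge whenever one is strictly contained in the other. -/
def Gk (k : ℕ) : SimpleGraph (GVert k) where
  Adj a b := a.1 ⊂ b.1 ∨ b.1 ⊂ a.1
  symm := ⟨fun _ _ h => h.symm⟩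
  loopless := ⟨fun _ h => by rcases h with h | h <;> exact (ssubset_irrefl _) h⟩

/-- A book embedding of a graph `G` in `m` pages: a linear order of the vertices (given by
an injective map to `ℝ`) together with an assignment of each edge to one of `m` pages such
that no two edges on the same page interleave. -/
structure BookEmbedding {V : Type*} (G : SimpleGraph V) (m : ℕ) where
  ord : V → ℝ
  ord_inj : Function.Injective ord
  page : ∀ {u v : V}, G.Adj u v → Fin m
  page_symm : ∀ {u v : V} (h : G.Adj u v), page h.symm = page h
  noCross : ∀ {a b c d : V} (h : G.Adj a b) (h' : G.Adj c d),
      page h = page h' →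
      ¬ (ord a < ord c ∧ ord c < ord b ∧ ord b < ord d)

namespace BookAux

def sing {k : ℕ} (i : Fin k) : GVert k := ⟨{i}, Or.inl (Finset.card_singleton i)⟩

def duo {k : ℕ} (i j : Fin k) : GVert k := ⟨{i,j}, Finset.card_pair_eq_one_or_two⟩

lemma sing_inj {k : ℕ} : Function.Injective (sing (k := k)) := by
  intro i j h
  have : ({i} : Finset (Fin k)) = {j} := congrArg Subtype.val h
  exact Finset.singleton_injective this

lemma sing_ne_duo {k : ℕ} (i j l : Fin k) (h : j ≠ l) : sing i ≠ duo j l := by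
  intro he
  have : ({i} : Finset (Fin k)) = {j,l} := congrArg Subtype.val he
  have h1 := congrArg Finset.card this
  rw [Finset.card_singleton, Finset.card_pair h] at h1
  omega

lemma duo_ne_duo {k : ℕ} {i j i' j' : Fin k} (h : i ≠ j) (h' : i' ≠ j')
    (hne : ¬ ((i = i' ∧ j = j') ∨ (i = j' ∧ j = i'))) : duo i j ≠ duo i' j' := by
  intro he
  have hval : ({i,j} : Finset (Fin k)) = {i',j'} := congrArg Subtype.val he
  apply hne
  have hi : i ∈ ({i',j'} : Finset (Fin k)) := by rw [← hval]; simp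
  have hj : j ∈ ({i',j'} : Finset (Fin k)) := by rw [← hval]; simp
  have hi' : i' ∈ ({i,j} : Finset (Fin k)) := by rw [hval]; simp
  have hj' : j' ∈ ({i,j} : Finset (Fin k)) := by rw [hval]; simp
  simp only [Finset.mem_insert, Finset.mem_singleton] at hi hj hi' hj'
  rcases hi with h1 | h1 <;> rcases hj with h2 | h2 <;> tauto

lemma adjL {k : ℕ} (i j : Fin k) (h : i ≠ j) : (Gk k).Adj (sing i) (duo i j) := by
  left
  show ({i} : Finset (Fin k)) ⊂ {i,j}
  rw [Finset.ssubset_def]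
  constructor
  · intro a ha; simp only [Finset.mem_singleton] at ha; simp [ha]
  · intro hsub
    have := Finset.card_le_card hsub
    rw [Finset.card_pair h, Finset.card_singleton] at this
    omega

lemma adjR {k : ℕ} (i j : Fin k) (h : i ≠ j) : (Gk k).Adj (duo i j) (sing j) := by
  right
  show ({j} : Finset (Fin k)) ⊂ {i,j}
  rw [Finset.ssubset_def]
  constructor
  · intro a ha; simp only [Finset.mem_singleton] at ha; simp [ha]
  · intro hsub
    have := Finset.card_le_card hsub
    rw [Finset.card_pair h, Finset.card_singleton] at this
    omega

variable {k m : ℕ}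

noncomputable def reg (E : BookEmbedding (Gk k) m) (i j : Fin k) : Fin 3 :=
  if E.ord (duo i j) < E.ord (sing i) then 0
  else if E.ord (duo i j) < E.ord (sing j) then 1 else 2

noncomputable def col (E : BookEmbedding (Gk k) m) (hm : 0 < m) (i j : Fin k) :
    Fin m × Fin m × Fin 3 :=
  if h : i = j then (⟨0, hm⟩, ⟨0, hm⟩, 0)
  else if E.ord (sing i) < E.ord (sing j)
    then (E.page (adjL i j h), E.page (adjR i j h), reg E i j)
    else (E.page (adjL j i (Ne.symm h)), E.page (adjR j i (Ne.symm h)), reg E j i)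

lemma col_eq (E : BookEmbedding (Gk k) m) (hm : 0 < m) {i j : Fin k} (h : i ≠ j)
    (hlt : E.ord (sing i) < E.ord (sing j)) :
    col E hm i j = (E.page (adjL i j h), E.page (adjR i j h), reg E i j) := by
  rw [col, dif_neg h, if_pos hlt]

lemma col_symm (E : BookEmbedding (Gk k) m) (hm : 0 < m) {i j : Fin k} (h : i ≠ j) :
    col E hm j i = col E hm i j := by
  have hne : E.ord (sing i) ≠ E.ord (sing j) := fun he => h (sing_inj (E.ord_inj he))
  rcases lt_or_gt_of_ne hne with hlt | hlt
  · rw [col_eq E hm h hlt]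
    rw [show col E hm j i = _ from dif_neg (Ne.symm h)]
    rw [if_neg (not_lt.mpr (le_of_lt hlt))]
  · rw [col_eq E hm (Ne.symm h) hlt]
    rw [show col E hm i j = _ from dif_neg h]
    rw [if_neg (not_lt.mpr (le_of_lt hlt))]

lemma ord_duo_ne_left (E : BookEmbedding (Gk k) m) {i j : Fin k} (h : i ≠ j) (l : Fin k) :
    E.ord (duo i j) ≠ E.ord (sing l) := by
  intro he
  exact sing_ne_duo l i j h (E.ord_inj he.symm)

lemma reg_spec0 (E : BookEmbedding (Gk k) m) {i j : Fin k} (_ : i ≠ j)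
    (hr : reg E i j = 0) : E.ord (duo i j) < E.ord (sing i) := by
  rw [reg] at hr
  split_ifs at hr with h1 h2
  · exact h1
  · exact absurd hr (by decide)
  · exact absurd hr (by decide)

lemma reg_spec1 (E : BookEmbedding (Gk k) m) {i j : Fin k} (h : i ≠ j)
    (hr : reg E i j = 1) :
    E.ord (sing i) < E.ord (duo i j) ∧ E.ord (duo i j) < E.ord (sing j) := by
  rw [reg] at hr
  split_ifs at hr with h1 h2
  · exact absurd hr (by decide)
  · exact ⟨lt_of_le_of_ne (not_lt.mp h1) (Ne.symm (ord_duo_ne_left E h i)), h2⟩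
  · exact absurd hr (by decide)

lemma reg_spec2 (E : BookEmbedding (Gk k) m) {i j : Fin k} (h : i ≠ j)
    (hr : reg E i j = 2) : E.ord (sing j) < E.ord (duo i j) := by
  rw [reg] at hr
  split_ifs at hr with h1 h2
  · exact absurd hr (by decide)
  · exact absurd hr (by decide)
  · exact lt_of_le_of_ne (not_lt.mp h2) (Ne.symm (ord_duo_ne_left E h j))

end BookAux




lemma exists_mono_seq {α : Type*} {C : Type*} [DecidableEq α] [DecidableEq C] [Fintype C]
    [Nonempty C] :
    ∀ (m : ℕ) (S : Finset α) (f : α → α → C), (Fintype.card C + 1) ^ m ≤ S.card →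
    ∃ (a : ℕ → α) (g : ℕ → C),
      (∀ i, i < m → a i ∈ S) ∧
      (∀ i j, i < j → j < m → a i ≠ a j ∧ f (a i) (a j) = g i) := by
  intro m
  induction m with
  | zero =>
    intro S f hS
    obtain ⟨x, hx⟩ := Finset.card_pos.mp (by simpa using hS)
    exact ⟨fun _ => x, fun _ => Classical.arbitrary C, fun i hi => by omega,
      fun i j hij hj => by omega⟩
  | succ m ih =>
    intro S f hS
    set c := Fintype.card C with hc
    have hc1 : 1 ≤ c := Fintype.card_pos
    have hA : 1 ≤ (c+1)^m := Nat.one_le_pow _ _ (by omega)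
    have hScard : 1 ≤ S.card := le_trans (Nat.one_le_pow _ _ (by omega)) hS
    obtain ⟨x, hx⟩ := Finset.card_pos.mp hScard
    set T := S.erase x with hT
    have hTcard : (c+1)^(m+1) - 1 ≤ T.card := by
      rw [hT, Finset.card_erase_of_mem hx]; omega
    have hpow : (c+1)^(m+1) = (c+1)^m * (c+1) := pow_succ _ _
    have hmul : c * ((c+1)^m - 1) < T.card := by
      have h2 : c * ((c+1)^m - 1) < (c+1)^m * (c+1) - 1 := by
        obtain ⟨B, hB⟩ : ∃ B, (c+1)^m = B + 1 := ⟨(c+1)^m - 1, by omega⟩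
        rw [hB]
        have e1 : (B + 1) * (c + 1) = c * B + B + c + 1 := by ring
        have e2 : (B + 1) * (c + 1) - 1 = c * B + B + c := by
          rw [e1]; exact Nat.add_sub_cancel _ _
        have e3 : B + 1 - 1 = B := by omega
        rw [e2, e3]
        linarith
      omega
    obtain ⟨d, -, hd⟩ := Finset.exists_lt_card_fiber_of_mul_lt_card_of_maps_to
      (s := T) (t := (Finset.univ : Finset C)) (f := fun y => f x y)
      (fun a _ => Finset.mem_univ _) (by simpa using hmul)
    set U := T.filter (fun y => f x y = d) with hU
    have hUcard : (c+1)^m ≤ U.card := by omega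
    obtain ⟨a', g', ha'S, ha'⟩ := ih U f hUcard
    refine ⟨fun n => if n = 0 then x else a' (n-1), fun n => if n = 0 then d else g' (n-1),
      ?_, ?_⟩
    · intro i hi
      by_cases h0 : i = 0
      · simp [h0, hx]
      · simp only [h0, if_neg]
        have := ha'S (i-1) (by omega)
        rw [hU, Finset.mem_filter] at this
        exact Finset.mem_of_mem_erase this.1
    · intro i j hij hj
      by_cases h0 : i = 0
      · have hj0 : ¬ j = 0 := by omega
        simp only [h0, hj0, if_pos, if_neg, ite_true, ite_false]
        have hmem := ha'S (j-1) (by omega)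
        rw [hU, Finset.mem_filter] at hmem
        constructor
        · exact fun heq => (Finset.ne_of_mem_erase hmem.1) heq.symm
        · exact hmem.2
      · have hj0 : ¬ j = 0 := by omega
        simp only [h0, hj0, ite_false]
        exact ha' (i-1) (j-1) (by omega) (by omega)

lemma ramsey_pairs (C : Type*) [DecidableEq C] [Fintype C] [Nonempty C] (r : ℕ) (hr : 0 < r) :
    ∃ N, ∀ f : Fin N → Fin N → C,
      ∃ (d : C) (z : Fin r → Fin N),
        ∀ a b : Fin r, a < b → z a ≠ z b ∧ f (z a) (z b) = d := by
  classical
  set c := Fintype.card C with hc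
  have hc1 : 1 ≤ c := Fintype.card_pos
  refine ⟨(c+1)^(c*r), fun f => ?_⟩
  obtain ⟨a, g, haS, ha⟩ := exists_mono_seq (C := C) (c*r) (Finset.univ : Finset (Fin ((c+1)^(c*r)))) f
    (by simp [← hc])
  -- pigeonhole on g over range (c*r)
  obtain ⟨d, -, hd⟩ := Finset.exists_lt_card_fiber_of_mul_lt_card_of_maps_to
    (s := Finset.range (c*r)) (t := (Finset.univ : Finset C)) (f := g) (n := r - 1)
    (fun i _ => Finset.mem_univ _) (by
      simp only [Finset.card_range, Finset.card_univ, ← hc]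
      obtain ⟨s, hs⟩ : ∃ s, r = s + 1 := ⟨r - 1, by omega⟩
      rw [hs]
      have e1 : s + 1 - 1 = s := rfl
      rw [e1]
      have e2 : c * (s + 1) = c * s + c := by ring
      rw [e2]
      omega)
  set F := (Finset.range (Fintype.card C * r)).filter (fun i => g i = d) with hF
  have hFcard : r ≤ F.card := by omega
  obtain ⟨F', hF'sub, hF'card⟩ := Finset.exists_subset_card_eq hFcard
  have hF'r : F'.card = r := hF'card
  have e := F'.orderIsoOfFin hF'r
  refine ⟨d, fun i => a (e i : ℕ), fun i j hij => ?_⟩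
  have hei : (e i : ℕ) ∈ F := hF'sub (e i).2
  have hej : (e j : ℕ) ∈ F := hF'sub (e j).2
  rw [hF, Finset.mem_filter, Finset.mem_range] at hei hej
  have hlt : (e i : ℕ) < (e j : ℕ) := by
    have := e.strictMono hij
    exact this
  have := ha (e i : ℕ) (e j : ℕ) hlt hej.1
  exact ⟨this.1, by rw [this.2, hei.2]⟩


lemma coreM (x : Fin 5 → ℝ) (v : Fin 5 → Fin 5 → ℝ)
    (hx : ∀ i j : Fin 5, i < j → x i < x j)
    (hvx : ∀ i j k : Fin 5, i < j → v i j ≠ x k)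
    (hvv : ∀ i j k l : Fin 5, i < j → k < l → ¬(i = k ∧ j = l) → v i j ≠ v k l)
    (hv1 : ∀ i j : Fin 5, i < j → x i < v i j)
    (hv2 : ∀ i j : Fin 5, i < j → v i j < x j)
    (hP : ∀ i j k l : Fin 5, i < j → k < l → ¬(x i < x k ∧ x k < v i j ∧ v i j < v k l))
    (hQ : ∀ i j k l : Fin 5, i < j → k < l → ¬(v i j < v k l ∧ v k l < x j ∧ x j < x l)) : False := by
  have hx01 : x 0 < x 1 := hx 0 1 (by decide)
  have hx02 : x 0 < x 2 := hx 0 2 (by decide)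
  have hx03 : x 0 < x 3 := hx 0 3 (by decide)
  have hx04 : x 0 < x 4 := hx 0 4 (by decide)
  have hx12 : x 1 < x 2 := hx 1 2 (by decide)
  have hx13 : x 1 < x 3 := hx 1 3 (by decide)
  have hx14 : x 1 < x 4 := hx 1 4 (by decide)
  have hx23 : x 2 < x 3 := hx 2 3 (by decide)
  have hx24 : x 2 < x 4 := hx 2 4 (by decide)
  have hx34 : x 3 < x 4 := hx 3 4 (by decide)
  have ha01 : x 0 < v 0 1 := hv1 0 1 (by decide)
  have hb01 : v 0 1 < x 1 := hv2 0 1 (by decide)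
  have ha02 : x 0 < v 0 2 := hv1 0 2 (by decide)
  have hb02 : v 0 2 < x 2 := hv2 0 2 (by decide)
  have ha03 : x 0 < v 0 3 := hv1 0 3 (by decide)
  have hb03 : v 0 3 < x 3 := hv2 0 3 (by decide)
  have ha04 : x 0 < v 0 4 := hv1 0 4 (by decide)
  have hb04 : v 0 4 < x 4 := hv2 0 4 (by decide)
  have ha12 : x 1 < v 1 2 := hv1 1 2 (by decide)
  have hb12 : v 1 2 < x 2 := hv2 1 2 (by decide)
  have ha13 : x 1 < v 1 3 := hv1 1 3 (by decide)
  have hb13 : v 1 3 < x 3 := hv2 1 3 (by decide)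
  have ha14 : x 1 < v 1 4 := hv1 1 4 (by decide)
  have hb14 : v 1 4 < x 4 := hv2 1 4 (by decide)
  have ha23 : x 2 < v 2 3 := hv1 2 3 (by decide)
  have hb23 : v 2 3 < x 3 := hv2 2 3 (by decide)
  have ha24 : x 2 < v 2 4 := hv1 2 4 (by decide)
  have hb24 : v 2 4 < x 4 := hv2 2 4 (by decide)
  have ha34 : x 3 < v 3 4 := hv1 3 4 (by decide)
  have hb34 : v 3 4 < x 4 := hv2 3 4 (by decide)
  rcases lt_or_gt_of_ne (Ne.symm (hvx 0 2 1 (by decide))) with h1 | h1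
  ·
    rcases lt_or_gt_of_ne (hvv 0 2 1 2 (by decide) (by decide) (by decide)) with h2 | h2
    ·
      exact hP 0 2 1 2 (by decide) (by decide) ⟨by linarith, by linarith, by linarith⟩
    ·
      rcases lt_or_gt_of_ne (hvv 0 2 1 3 (by decide) (by decide) (by decide)) with h3 | h3
      ·
        exact hP 0 2 1 3 (by decide) (by decide) ⟨by linarith, by linarith, by linarith⟩
      ·
        rcases lt_or_gt_of_ne (hvv 0 2 1 4 (by decide) (by decide) (by decide)) with h4 | h4
        ·
          exact hP 0 2 1 4 (by decide) (by decide) ⟨by linarith, by linarith, by linarith⟩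
        ·
          rcases lt_or_gt_of_ne (hvv 0 3 1 4 (by decide) (by decide) (by decide)) with h5 | h5
          ·
            exact hQ 0 3 1 4 (by decide) (by decide) ⟨by linarith, by linarith, by linarith⟩
          ·
            rcases lt_or_gt_of_ne (hvv 0 3 1 2 (by decide) (by decide) (by decide)) with h6 | h6
            ·
              exact hP 0 3 1 2 (by decide) (by decide) ⟨by linarith, by linarith, by linarith⟩
            ·
              rcases lt_or_gt_of_ne (hvv 0 3 1 3 (by decide) (by decide) (by decide)) with h7 | h7
              ·
                exact hP 0 3 1 3 (by decide) (by decide) ⟨by linarith, by linarith, by linarith⟩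
              ·
                rcases lt_or_gt_of_ne (hvx 0 3 2 (by decide)) with h8 | h8
                ·
                  exact hQ 1 2 0 3 (by decide) (by decide) ⟨by linarith, by linarith, by linarith⟩
                ·
                  rcases lt_or_gt_of_ne (hvv 0 3 2 3 (by decide) (by decide) (by decide)) with h9 | h9
                  ·
                    exact hP 0 3 2 3 (by decide) (by decide) ⟨by linarith, by linarith, by linarith⟩
                  ·
                    rcases lt_or_gt_of_ne (hvv 0 3 2 4 (by decide) (by decide) (by decide)) with h10 | h10
                    ·
                      exact hP 0 3 2 4 (by decide) (by decide) ⟨by linarith, by linarith, by linarith⟩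
                    ·
                      exact hQ 1 3 2 4 (by decide) (by decide) ⟨by linarith, by linarith, by linarith⟩
  ·
    rcases lt_or_gt_of_ne (hvv 0 1 0 2 (by decide) (by decide) (by decide)) with h11 | h11
    ·
      exact hQ 0 1 0 2 (by decide) (by decide) ⟨by linarith, by linarith, by linarith⟩
    ·
      rcases lt_or_gt_of_ne (hvx 1 3 2 (by decide)) with h12 | h12
      ·
        exact hQ 0 2 1 3 (by decide) (by decide) ⟨by linarith, by linarith, by linarith⟩
      ·
        rcases lt_or_gt_of_ne (hvv 1 3 2 3 (by decide) (by decide) (by decide)) with h13 | h13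
        ·
          exact hP 1 3 2 3 (by decide) (by decide) ⟨by linarith, by linarith, by linarith⟩
        ·
          rcases lt_or_gt_of_ne (hvv 1 3 2 4 (by decide) (by decide) (by decide)) with h14 | h14
          ·
            exact hP 1 3 2 4 (by decide) (by decide) ⟨by linarith, by linarith, by linarith⟩
          ·
            rcases lt_or_gt_of_ne (hvx 1 4 2 (by decide)) with h15 | h15
            ·
              exact hQ 0 2 1 4 (by decide) (by decide) ⟨by linarith, by linarith, by linarith⟩
            ·
              rcases lt_or_gt_of_ne (hvv 1 4 2 3 (by decide) (by decide) (by decide)) with h16 | h16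
              ·
                exact hP 1 4 2 3 (by decide) (by decide) ⟨by linarith, by linarith, by linarith⟩
              ·
                rcases lt_or_gt_of_ne (hvv 1 4 2 4 (by decide) (by decide) (by decide)) with h17 | h17
                ·
                  exact hP 1 4 2 4 (by decide) (by decide) ⟨by linarith, by linarith, by linarith⟩
                ·
                  rcases lt_or_gt_of_ne (hvv 0 3 2 4 (by decide) (by decide) (by decide)) with h18 | h18
                  ·
                    exact hQ 0 3 2 4 (by decide) (by decide) ⟨by linarith, by linarith, by linarith⟩
                  ·
                    rcases lt_or_gt_of_ne (hvv 0 3 1 3 (by decide) (by decide) (by decide)) with h19 | h19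
                    ·
                      exact hP 0 3 1 3 (by decide) (by decide) ⟨by linarith, by linarith, by linarith⟩
                    ·
                      rcases lt_or_gt_of_ne (hvv 0 3 1 4 (by decide) (by decide) (by decide)) with h20 | h20
                      ·
                        exact hP 0 3 1 4 (by decide) (by decide) ⟨by linarith, by linarith, by linarith⟩
                      ·
                        exact hQ 2 3 1 4 (by decide) (by decide) ⟨by linarith, by linarith, by linarith⟩

lemma coreL (x : Fin 5 → ℝ) (v : Fin 5 → Fin 5 → ℝ)
    (hx : ∀ i j : Fin 5, i < j → x i < x j)
    (hvx : ∀ i j k : Fin 5, i < j → v i j ≠ x k)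
    (hvv : ∀ i j k l : Fin 5, i < j → k < l → ¬(i = k ∧ j = l) → v i j ≠ v k l)
    (hv1 : ∀ i j : Fin 5, i < j → v i j < x i)
    (hP : ∀ i j k l : Fin 5, i < j → k < l → ¬(v i j < v k l ∧ v k l < x i ∧ x i < x k))
    (hQ : ∀ i j k l : Fin 5, i < j → k < l → ¬(v i j < v k l ∧ v k l < x j ∧ x j < x l)) : False := by
  have hx01 : x 0 < x 1 := hx 0 1 (by decide)
  have hx02 : x 0 < x 2 := hx 0 2 (by decide)
  have hx03 : x 0 < x 3 := hx 0 3 (by decide)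
  have hx04 : x 0 < x 4 := hx 0 4 (by decide)
  have hx12 : x 1 < x 2 := hx 1 2 (by decide)
  have hx13 : x 1 < x 3 := hx 1 3 (by decide)
  have hx14 : x 1 < x 4 := hx 1 4 (by decide)
  have hx23 : x 2 < x 3 := hx 2 3 (by decide)
  have hx24 : x 2 < x 4 := hx 2 4 (by decide)
  have hx34 : x 3 < x 4 := hx 3 4 (by decide)
  have ha01 : v 0 1 < x 0 := hv1 0 1 (by decide)
  have ha02 : v 0 2 < x 0 := hv1 0 2 (by decide)
  have ha03 : v 0 3 < x 0 := hv1 0 3 (by decide)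
  have ha04 : v 0 4 < x 0 := hv1 0 4 (by decide)
  have ha12 : v 1 2 < x 1 := hv1 1 2 (by decide)
  have ha13 : v 1 3 < x 1 := hv1 1 3 (by decide)
  have ha14 : v 1 4 < x 1 := hv1 1 4 (by decide)
  have ha23 : v 2 3 < x 2 := hv1 2 3 (by decide)
  have ha24 : v 2 4 < x 2 := hv1 2 4 (by decide)
  have ha34 : v 3 4 < x 3 := hv1 3 4 (by decide)
  rcases lt_or_gt_of_ne (hvv 0 1 0 2 (by decide) (by decide) (by decide)) with h21 | h21
  ·
    exact hQ 0 1 0 2 (by decide) (by decide) ⟨by linarith, by linarith, by linarith⟩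
  ·
    rcases lt_or_gt_of_ne (hvv 0 1 0 3 (by decide) (by decide) (by decide)) with h22 | h22
    ·
      exact hQ 0 1 0 3 (by decide) (by decide) ⟨by linarith, by linarith, by linarith⟩
    ·
      rcases lt_or_gt_of_ne (hvv 0 1 0 4 (by decide) (by decide) (by decide)) with h23 | h23
      ·
        exact hQ 0 1 0 4 (by decide) (by decide) ⟨by linarith, by linarith, by linarith⟩
      ·
        rcases lt_or_gt_of_ne (hvv 0 1 1 2 (by decide) (by decide) (by decide)) with h24 | h24
        ·
          exact hQ 0 1 1 2 (by decide) (by decide) ⟨by linarith, by linarith, by linarith⟩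
        ·
          rcases lt_or_gt_of_ne (hvv 0 2 1 2 (by decide) (by decide) (by decide)) with h25 | h25
          ·
            exact hP 0 2 1 2 (by decide) (by decide) ⟨by linarith, by linarith, by linarith⟩
          ·
            rcases lt_or_gt_of_ne (hvv 0 3 1 2 (by decide) (by decide) (by decide)) with h26 | h26
            ·
              exact hP 0 3 1 2 (by decide) (by decide) ⟨by linarith, by linarith, by linarith⟩
            ·
              exact hQ 1 2 0 3 (by decide) (by decide) ⟨by linarith, by linarith, by linarith⟩

lemma coreR (x : Fin 5 → ℝ) (v : Fin 5 → Fin 5 → ℝ)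
    (hx : ∀ i j : Fin 5, i < j → x i < x j)
    (hvx : ∀ i j k : Fin 5, i < j → v i j ≠ x k)
    (hvv : ∀ i j k l : Fin 5, i < j → k < l → ¬(i = k ∧ j = l) → v i j ≠ v k l)
    (hv1 : ∀ i j : Fin 5, i < j → x j < v i j)
    (hP : ∀ i j k l : Fin 5, i < j → k < l → ¬(x i < x k ∧ x k < v i j ∧ v i j < v k l))
    (hQ : ∀ i j k l : Fin 5, i < j → k < l → ¬(x j < x l ∧ x l < v i j ∧ v i j < v k l)) : False := by
  have hx01 : x 0 < x 1 := hx 0 1 (by decide)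
  have hx02 : x 0 < x 2 := hx 0 2 (by decide)
  have hx03 : x 0 < x 3 := hx 0 3 (by decide)
  have hx04 : x 0 < x 4 := hx 0 4 (by decide)
  have hx12 : x 1 < x 2 := hx 1 2 (by decide)
  have hx13 : x 1 < x 3 := hx 1 3 (by decide)
  have hx14 : x 1 < x 4 := hx 1 4 (by decide)
  have hx23 : x 2 < x 3 := hx 2 3 (by decide)
  have hx24 : x 2 < x 4 := hx 2 4 (by decide)
  have hx34 : x 3 < x 4 := hx 3 4 (by decide)
  have ha01 : x 1 < v 0 1 := hv1 0 1 (by decide)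
  have ha02 : x 2 < v 0 2 := hv1 0 2 (by decide)
  have ha03 : x 3 < v 0 3 := hv1 0 3 (by decide)
  have ha04 : x 4 < v 0 4 := hv1 0 4 (by decide)
  have ha12 : x 2 < v 1 2 := hv1 1 2 (by decide)
  have ha13 : x 3 < v 1 3 := hv1 1 3 (by decide)
  have ha14 : x 4 < v 1 4 := hv1 1 4 (by decide)
  have ha23 : x 3 < v 2 3 := hv1 2 3 (by decide)
  have ha24 : x 4 < v 2 4 := hv1 2 4 (by decide)
  have ha34 : x 4 < v 3 4 := hv1 3 4 (by decide)
  rcases lt_or_gt_of_ne (hvv 0 1 1 2 (by decide) (by decide) (by decide)) with h27 | h27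
  ·
    exact hP 0 1 1 2 (by decide) (by decide) ⟨by linarith, by linarith, by linarith⟩
  ·
    rcases lt_or_gt_of_ne (hvv 0 1 1 3 (by decide) (by decide) (by decide)) with h28 | h28
    ·
      exact hP 0 1 1 3 (by decide) (by decide) ⟨by linarith, by linarith, by linarith⟩
    ·
      rcases lt_or_gt_of_ne (hvv 0 1 1 4 (by decide) (by decide) (by decide)) with h29 | h29
      ·
        exact hP 0 1 1 4 (by decide) (by decide) ⟨by linarith, by linarith, by linarith⟩
      ·
        rcases lt_or_gt_of_ne (hvv 0 1 2 3 (by decide) (by decide) (by decide)) with h30 | h30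
        ·
          exact hP 0 1 2 3 (by decide) (by decide) ⟨by linarith, by linarith, by linarith⟩
        ·
          rcases lt_or_gt_of_ne (hvv 0 1 2 4 (by decide) (by decide) (by decide)) with h31 | h31
          ·
            exact hP 0 1 2 4 (by decide) (by decide) ⟨by linarith, by linarith, by linarith⟩
          ·
            rcases lt_or_gt_of_ne (hvv 0 1 3 4 (by decide) (by decide) (by decide)) with h32 | h32
            ·
              exact hP 0 1 3 4 (by decide) (by decide) ⟨by linarith, by linarith, by linarith⟩
            ·
              rcases lt_or_gt_of_ne (hvv 0 2 1 2 (by decide) (by decide) (by decide)) with h33 | h33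
              ·
                exact hP 0 2 1 2 (by decide) (by decide) ⟨by linarith, by linarith, by linarith⟩
              ·
                rcases lt_or_gt_of_ne (hvv 0 2 1 3 (by decide) (by decide) (by decide)) with h34 | h34
                ·
                  exact hP 0 2 1 3 (by decide) (by decide) ⟨by linarith, by linarith, by linarith⟩
                ·
                  rcases lt_or_gt_of_ne (hvv 0 2 1 4 (by decide) (by decide) (by decide)) with h35 | h35
                  ·
                    exact hP 0 2 1 4 (by decide) (by decide) ⟨by linarith, by linarith, by linarith⟩
                  ·
                    rcases lt_or_gt_of_ne (hvv 0 2 2 3 (by decide) (by decide) (by decide)) with h36 | h36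
                    ·
                      exact hP 0 2 2 3 (by decide) (by decide) ⟨by linarith, by linarith, by linarith⟩
                    ·
                      rcases lt_or_gt_of_ne (hvv 0 2 2 4 (by decide) (by decide) (by decide)) with h37 | h37
                      ·
                        exact hP 0 2 2 4 (by decide) (by decide) ⟨by linarith, by linarith, by linarith⟩
                      ·
                        rcases lt_or_gt_of_ne (hvv 0 2 3 4 (by decide) (by decide) (by decide)) with h38 | h38
                        ·
                          exact hP 0 2 3 4 (by decide) (by decide) ⟨by linarith, by linarith, by linarith⟩
                        ·
                          rcases lt_or_gt_of_ne (hvv 0 3 1 2 (by decide) (by decide) (by decide)) with h39 | h39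
                          ·
                            exact hP 0 3 1 2 (by decide) (by decide) ⟨by linarith, by linarith, by linarith⟩
                          ·
                            rcases lt_or_gt_of_ne (hvv 0 3 1 3 (by decide) (by decide) (by decide)) with h40 | h40
                            ·
                              exact hP 0 3 1 3 (by decide) (by decide) ⟨by linarith, by linarith, by linarith⟩
                            ·
                              rcases lt_or_gt_of_ne (hvv 0 3 1 4 (by decide) (by decide) (by decide)) with h41 | h41
                              ·
                                exact hP 0 3 1 4 (by decide) (by decide) ⟨by linarith, by linarith, by linarith⟩
                              ·
                                rcases lt_or_gt_of_ne (hvv 0 3 2 3 (by decide) (by decide) (by decide)) with h42 | h42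
                                ·
                                  exact hP 0 3 2 3 (by decide) (by decide) ⟨by linarith, by linarith, by linarith⟩
                                ·
                                  rcases lt_or_gt_of_ne (hvv 0 3 2 4 (by decide) (by decide) (by decide)) with h43 | h43
                                  ·
                                    exact hP 0 3 2 4 (by decide) (by decide) ⟨by linarith, by linarith, by linarith⟩
                                  ·
                                    rcases lt_or_gt_of_ne (hvv 0 3 3 4 (by decide) (by decide) (by decide)) with h44 | h44
                                    ·
                                      exact hP 0 3 3 4 (by decide) (by decide) ⟨by linarith, by linarith, by linarith⟩
                                    ·
                                      rcases lt_or_gt_of_ne (hvv 0 4 1 2 (by decide) (by decide) (by decide)) with h45 | h45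
                                      ·
                                        exact hP 0 4 1 2 (by decide) (by decide) ⟨by linarith, by linarith, by linarith⟩
                                      ·
                                        rcases lt_or_gt_of_ne (hvv 0 4 1 3 (by decide) (by decide) (by decide)) with h46 | h46
                                        ·
                                          exact hP 0 4 1 3 (by decide) (by decide) ⟨by linarith, by linarith, by linarith⟩
                                        ·
                                          rcases lt_or_gt_of_ne (hvv 0 4 1 4 (by decide) (by decide) (by decide)) with h47 | h47
                                          ·
                                            exact hP 0 4 1 4 (by decide) (by decide) ⟨by linarith, by linarith, by linarith⟩
                                          ·
                                            rcases lt_or_gt_of_ne (hvv 0 4 2 3 (by decide) (by decide) (by decide)) with h48 | h48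
                                            ·
                                              exact hP 0 4 2 3 (by decide) (by decide) ⟨by linarith, by linarith, by linarith⟩
                                            ·
                                              rcases lt_or_gt_of_ne (hvv 0 4 2 4 (by decide) (by decide) (by decide)) with h49 | h49
                                              ·
                                                exact hP 0 4 2 4 (by decide) (by decide) ⟨by linarith, by linarith, by linarith⟩
                                              ·
                                                rcases lt_or_gt_of_ne (hvv 0 4 3 4 (by decide) (by decide) (by decide)) with h50 | h50
                                                ·
                                                  exact hP 0 4 3 4 (by decide) (by decide) ⟨by linarith, by linarith, by linarith⟩
                                                ·
                                                  rcases lt_or_gt_of_ne (hvv 1 2 2 3 (by decide) (by decide) (by decide)) with h51 | h51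
                                                  ·
                                                    exact hP 1 2 2 3 (by decide) (by decide) ⟨by linarith, by linarith, by linarith⟩
                                                  ·
                                                    exact hQ 1 2 0 3 (by decide) (by decide) ⟨by linarith, by linarith, by linarith⟩


/-- For every positive integer `t` there is a `k` such that the full subdivision `G_k` of
`K_k` has no book embedding in `t - 1` pages. -/

theorem Gk_unbounded_book_thickness (t : ℕ) (ht : 0 < t) :
    ∃ k, ¬ Nonempty (BookEmbedding (Gk k) (t - 1)) := by
  classical
  set m := t - 1 with hmdef
  by_cases hm : m = 0
  · refine ⟨2, fun ⟨E⟩ => ?_⟩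
    have hp := E.page (BookAux.adjL (0 : Fin 2) 1 (by decide))
    rw [hm] at hp
    exact hp.elim0
  · have hm0 : 0 < m := Nat.pos_of_ne_zero hm
    have : Nonempty (Fin m × Fin m × Fin 3) := ⟨(⟨0, hm0⟩, ⟨0, hm0⟩, 0)⟩
    obtain ⟨N, hN⟩ := ramsey_pairs (Fin m × Fin m × Fin 3) 5 (by norm_num)
    refine ⟨N, fun ⟨E⟩ => ?_⟩
    obtain ⟨d, z, hz⟩ := hN (BookAux.col E hm0)
    have hzinj : Function.Injective z := by
      intro a b hab
      by_contra hne
      rcases lt_or_gt_of_ne hne with hlt | hlt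
      · exact (hz a b hlt).1 hab
      · exact (hz b a hlt).1 hab.symm
    obtain ⟨y, hyinj, hmono, hcold⟩ :
        ∃ y : Fin 5 → Fin N, Function.Injective y ∧
          StrictMono (fun n => E.ord (BookAux.sing (y n))) ∧
          ∀ a b : Fin 5, a ≠ b → BookAux.col E hm0 (y a) (y b) = d := by
      set σ := Tuple.sort (fun a => E.ord (BookAux.sing (z a))) with hσ
      refine ⟨fun n => z (σ n), hzinj.comp σ.injective, ?_, ?_⟩
      · have h1 : Monotone ((fun a => E.ord (BookAux.sing (z a))) ∘ σ) :=
          Tuple.monotone_sort _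
        have h2 : Function.Injective ((fun a => E.ord (BookAux.sing (z a))) ∘ σ) := by
          intro a b hab
          exact σ.injective (hzinj (BookAux.sing_inj (E.ord_inj hab)))
        exact h1.strictMono_of_injective h2
      · intro a b hab
        have hσab : σ a ≠ σ b := fun he => hab (σ.injective he)
        rcases lt_or_gt_of_ne hσab with hlt | hlt
        · exact (hz (σ a) (σ b) hlt).2
        · rw [BookAux.col_symm E hm0 ((hz (σ b) (σ a) hlt).1)]
          exact (hz (σ b) (σ a) hlt).2
    have hyne : ∀ {n n' : Fin 5}, n < n' → y n ≠ y n' := fun h he => absurd (hyinj he) (ne_of_lt h)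
    -- main color extraction
    have hmain : ∀ (n n' : Fin 5) (hlt : n < n'),
        E.page (BookAux.adjL (y n) (y n') (hyne hlt)) = d.1 ∧
        E.page (BookAux.adjR (y n) (y n') (hyne hlt)) = d.2.1 ∧
        BookAux.reg E (y n) (y n') = d.2.2 := by
      intro n n' hlt
      have h1 := BookAux.col_eq E hm0 (hyne hlt) (hmono hlt)
      have h2 : d = (E.page (BookAux.adjL (y n) (y n') (hyne hlt)),
          E.page (BookAux.adjR (y n) (y n') (hyne hlt)),
          BookAux.reg E (y n) (y n')) :=
        (hcold n n' (ne_of_lt hlt)).symm.trans h1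
      refine ⟨?_, ?_, ?_⟩ <;> rw [h2]
    -- abbreviations
    have hvv : ∀ i j k l : Fin 5, i < j → k < l → ¬(i = k ∧ j = l) →
        E.ord (BookAux.duo (y i) (y j)) ≠ E.ord (BookAux.duo (y k) (y l)) := by
      intro i j k l hij hkl hne he
      refine BookAux.duo_ne_duo (hyne hij) (hyne hkl) ?_ (E.ord_inj he)
      rintro (⟨h1, h2⟩ | ⟨h1, h2⟩)
      · exact hne ⟨hyinj h1, hyinj h2⟩
      · have e1 : i = l := hyinj h1
        have e2 : j = k := hyinj h2
        rw [e1, e2] at hij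
        exact absurd (hkl.trans hij) (lt_irrefl _)
    have hvx : ∀ i j k : Fin 5, i < j →
        E.ord (BookAux.duo (y i) (y j)) ≠ E.ord (BookAux.sing (y k)) := by
      intro i j k hij
      exact BookAux.ord_duo_ne_left E (hyne hij) (y k)
    -- noCross instances
    have hPA : ∀ i j k l : Fin 5, i < j → k < l →
        ¬(E.ord (BookAux.sing (y i)) < E.ord (BookAux.sing (y k)) ∧
          E.ord (BookAux.sing (y k)) < E.ord (BookAux.duo (y i) (y j)) ∧
          E.ord (BookAux.duo (y i) (y j)) < E.ord (BookAux.duo (y k) (y l))) := by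
      intro i j k l hij hkl
      exact E.noCross (BookAux.adjL (y i) (y j) (hyne hij))
        (BookAux.adjL (y k) (y l) (hyne hkl))
        ((hmain i j hij).1.trans (hmain k l hkl).1.symm)
    have hQA : ∀ i j k l : Fin 5, i < j → k < l →
        ¬(E.ord (BookAux.duo (y i) (y j)) < E.ord (BookAux.duo (y k) (y l)) ∧
          E.ord (BookAux.duo (y k) (y l)) < E.ord (BookAux.sing (y j)) ∧
          E.ord (BookAux.sing (y j)) < E.ord (BookAux.sing (y l))) := by
      intro i j k l hij hkl
      exact E.noCross (BookAux.adjR (y i) (y j) (hyne hij))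
        (BookAux.adjR (y k) (y l) (hyne hkl))
        ((hmain i j hij).2.1.trans (hmain k l hkl).2.1.symm)
    have hPL : ∀ i j k l : Fin 5, i < j → k < l →
        ¬(E.ord (BookAux.duo (y i) (y j)) < E.ord (BookAux.duo (y k) (y l)) ∧
          E.ord (BookAux.duo (y k) (y l)) < E.ord (BookAux.sing (y i)) ∧
          E.ord (BookAux.sing (y i)) < E.ord (BookAux.sing (y k))) := by
      intro i j k l hij hkl
      refine E.noCross (BookAux.adjL (y i) (y j) (hyne hij)).symm
        (BookAux.adjL (y k) (y l) (hyne hkl)).symm ?_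
      exact (E.page_symm _).trans
        (((hmain i j hij).1.trans (hmain k l hkl).1.symm).trans (E.page_symm _).symm)
    have hQR : ∀ i j k l : Fin 5, i < j → k < l →
        ¬(E.ord (BookAux.sing (y j)) < E.ord (BookAux.sing (y l)) ∧
          E.ord (BookAux.sing (y l)) < E.ord (BookAux.duo (y i) (y j)) ∧
          E.ord (BookAux.duo (y i) (y j)) < E.ord (BookAux.duo (y k) (y l))) := by
      intro i j k l hij hkl
      refine E.noCross (BookAux.adjR (y i) (y j) (hyne hij)).symm
        (BookAux.adjR (y k) (y l) (hyne hkl)).symm ?_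
      exact (E.page_symm _).trans
        (((hmain i j hij).2.1.trans (hmain k l hkl).2.1.symm).trans (E.page_symm _).symm)
    -- region cases
    have hx : ∀ i j : Fin 5, i < j →
        E.ord (BookAux.sing (y i)) < E.ord (BookAux.sing (y j)) := fun i j h => hmono h
    rcases (by decide : ∀ a : Fin 3, a = 0 ∨ a = 1 ∨ a = 2) d.2.2 with hr | hr | hr
    · -- region L
      have hv1 : ∀ i j : Fin 5, i < j →
          E.ord (BookAux.duo (y i) (y j)) < E.ord (BookAux.sing (y i)) := by
        intro i j hij
        exact BookAux.reg_spec0 E (hyne hij) ((hmain i j hij).2.2.trans hr)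
      exact coreL (fun n => E.ord (BookAux.sing (y n)))
        (fun n n' => E.ord (BookAux.duo (y n) (y n'))) hx hvx hvv hv1 hPL hQA
    · -- region M
      have hv12 : ∀ i j : Fin 5, i < j →
          E.ord (BookAux.sing (y i)) < E.ord (BookAux.duo (y i) (y j)) ∧
          E.ord (BookAux.duo (y i) (y j)) < E.ord (BookAux.sing (y j)) := by
        intro i j hij
        exact BookAux.reg_spec1 E (hyne hij) ((hmain i j hij).2.2.trans hr)
      exact coreM (fun n => E.ord (BookAux.sing (y n)))
        (fun n n' => E.ord (BookAux.duo (y n) (y n'))) hx hvx hvv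
        (fun i j h => (hv12 i j h).1) (fun i j h => (hv12 i j h).2) hPA hQA
    · -- region R
      have hv1 : ∀ i j : Fin 5, i < j →
          E.ord (BookAux.sing (y j)) < E.ord (BookAux.duo (y i) (y j)) := by
        intro i j hij
        exact BookAux.reg_spec2 E (hyne hij) ((hmain i j hij).2.2.trans hr)
      exact coreR (fun n => E.ord (BookAux.sing (y n)))
        (fun n n' => E.ord (BookAux.duo (y n) (y n'))) hx hvx hvv hv1 hPA hQR
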